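/- Let R = A_{n-1} be realized as {e_i - e_j : i ≠ j in Z/nZ}, let w be the Coxeter element with w(e_i) = e_{i+1}, and for q ∈ (Z/nZ)^× let ν_q be the automorphism with ν_q(e_i) = e_{qi}. Then the sign of the permutation of the orbit set ⟨w⟩\R induced by ν_q equals the sign of the multiplication-by-q permutation of Z/nZ. -/

import Mathlib

open scoped Classical

/-- The root `e_i - e_j` of the root system `A_{n-1}`, realised in the space of real-valued
functions on `ℤ/nℤ`. -/
noncomputable def rootA (n : ℕ) (i j : ZMod n) : ZMod n → ℝ :=
  Pi.single i 1 - Pi.single j 1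

/-- The root system `A_{n-1} = {e_i - e_j : i ≠ j in ℤ/nℤ}`. -/
noncomputable def rootsA (n : ℕ) [NeZero n] : Finset (ZMod n → ℝ) :=
  Finset.image (fun p : ZMod n × ZMod n => rootA n p.1 p.2)
    (Finset.univ.filter fun p : ZMod n × ZMod n => p.1 ≠ p.2)

/-- The Coxeter element `w` of `A_{n-1}` with `w (e_i) = e_{i+1}`, as the linear automorphism
`(w f) k = f (k - 1)` of the ambient space. -/
noncomputable def wCoxA (n : ℕ) : (ZMod n → ℝ) ≃ₗ[ℝ] (ZMod n → ℝ) :=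
  LinearEquiv.funCongrLeft ℝ ℝ (Equiv.subRight (1 : ZMod n))

/-- The orbit equivalence relation of the cyclic group generated by a linear automorphism `v`
on a (stable) finite set of vectors. -/
def orbitSetoidOn {V : Type*} [AddCommGroup V] [Module ℝ V]
    (v : V ≃ₗ[ℝ] V) (S : Finset V) : Setoid {x : V // x ∈ S} where
  r x y := ∃ m : ℤ, (v ^ m) x.1 = y.1
  iseqv := by
    refine ⟨fun x => ⟨0, by rw [zpow_zero]; rfl⟩, ?_, ?_⟩
    · rintro x y ⟨m, hm⟩
      exact ⟨-m, by rw [zpow_neg, ← hm]; exact (v ^ m).symm_apply_apply x.1⟩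
    · rintro x y z ⟨m, hm⟩ ⟨k, hk⟩
      refine ⟨k + m, ?_⟩
      rw [zpow_add]
      show (v ^ k) ((v ^ m) x.1) = z.1
      rw [hm, hk]

/- ### Auxiliary lemmas -/

lemma wCoxA_zpow_apply (n : ℕ) (m : ℤ) (f : ZMod n → ℝ) (k : ZMod n) :
    ((wCoxA n ^ m) f) k = f (k - m) := by
  induction m using Int.induction_on generalizing f k with
  | zero => simp
  | succ i ih =>
      rw [zpow_add_one]
      show ((wCoxA n ^ (i:ℤ)) (wCoxA n f)) k = _
      rw [ih]
      show f (k - (i:ℤ) - 1) = _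
      push_cast
      ring_nf
  | pred i ih =>
      rw [zpow_sub_one]
      show ((wCoxA n ^ (-i:ℤ)) ((wCoxA n)⁻¹ f)) k = _
      rw [ih]
      show f (k - (-i:ℤ) + 1) = _
      push_cast
      ring_nf

lemma rootA_apply (n : ℕ) (i j k : ZMod n) :
    rootA n i j k = (if k = i then 1 else 0) - (if k = j then 1 else 0) := by
  simp [rootA, Pi.single_apply]

lemma wpow_rootA (n : ℕ) (m : ℤ) (i j : ZMod n) :
    (wCoxA n ^ m) (rootA n i j) = rootA n (i + m) (j + m) := by
  funext k
  rw [wCoxA_zpow_apply, rootA_apply, rootA_apply]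
  simp only [sub_eq_iff_eq_add]

lemma rootA_inj (n : ℕ) {i j i' j' : ZMod n} (h : i ≠ j) (h' : i' ≠ j')
    (e : rootA n i j = rootA n i' j') : i = i' ∧ j = j' := by
  have hi := congrFun e i
  have hj := congrFun e j
  rw [rootA_apply, rootA_apply] at hi hj
  simp only [if_pos rfl, if_neg h, if_neg (Ne.symm h)] at hi hj
  constructor
  · by_contra hne
    rw [if_neg hne] at hi
    split_ifs at hi <;> norm_num at hi
  · by_contra hne
    rw [if_neg hne] at hj
    split_ifs at hj <;> norm_num at hj

lemma rootA_mem (n : ℕ) [NeZero n] {i j : ZMod n} (h : i ≠ j) : rootA n i j ∈ rootsA n := by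
  rw [rootsA, Finset.mem_image]
  exact ⟨(i, j), by simpa using h, rfl⟩

/-- A chosen pair of indices representing a root in `rootsA n`. -/
noncomputable def repPair (n : ℕ) [NeZero n] (x : {v : ZMod n → ℝ // v ∈ rootsA n}) :
    ZMod n × ZMod n :=
  (Finset.mem_image.mp x.2).choose

lemma repPair_spec (n : ℕ) [NeZero n] (x : {v : ZMod n → ℝ // v ∈ rootsA n}) :
    (repPair n x).1 ≠ (repPair n x).2 ∧ rootA n (repPair n x).1 (repPair n x).2 = x.1 := by
  obtain ⟨hmem, heq⟩ := (Finset.mem_image.mp x.2).choose_spec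
  exact ⟨(Finset.mem_filter.mp hmem).2, heq⟩

/-- The invariant `j - i` of a root `e_i - e_j`. -/
noncomputable def orbDiff (n : ℕ) [NeZero n] (x : {v : ZMod n → ℝ // v ∈ rootsA n}) : ZMod n :=
  (repPair n x).2 - (repPair n x).1

lemma orbDiff_rootA (n : ℕ) [NeZero n] {i j : ZMod n} (h : i ≠ j)
    (hm : rootA n i j ∈ rootsA n) : orbDiff n ⟨rootA n i j, hm⟩ = j - i := by
  obtain ⟨hne, heq⟩ := repPair_spec n ⟨rootA n i j, hm⟩
  obtain ⟨h1, h2⟩ := rootA_inj n hne h heq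
  rw [orbDiff, h1, h2]

lemma orbDiff_ne_zero (n : ℕ) [NeZero n] (x : {v : ZMod n → ℝ // v ∈ rootsA n}) :
    orbDiff n x ≠ 0 := by
  obtain ⟨hne, _⟩ := repPair_spec n x
  rw [orbDiff]
  exact sub_ne_zero.mpr (Ne.symm hne)

lemma orbDiff_invariant (n : ℕ) [NeZero n] (x y : {v : ZMod n → ℝ // v ∈ rootsA n})
    (h : (orbitSetoidOn (wCoxA n) (rootsA n)).r x y) : orbDiff n x = orbDiff n y := by
  obtain ⟨m, hm⟩ := h
  obtain ⟨hne, heq⟩ := repPair_spec n x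
  set i := (repPair n x).1
  set j := (repPair n x).2
  have hy : y.1 = rootA n (i + m) (j + m) := by
    rw [← hm, ← heq, wpow_rootA]
  have hne' : i + (m : ZMod n) ≠ j + m := fun hc => hne (by
    have := add_right_cancel hc; exact this)
  have : orbDiff n y = (j + m) - (i + m) := by
    have hy' : y = ⟨rootA n (i + m) (j + m), by rw [← hy]; exact y.2⟩ := Subtype.ext hy
    rw [hy']
    exact orbDiff_rootA n hne' _
  rw [this, orbDiff]
  ring

/-- The orbit set is identified with the nonzero elements of `ZMod n`. -/
noncomputable def orbitEquiv (n : ℕ) [NeZero n] :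
    Quotient (orbitSetoidOn (wCoxA n) (rootsA n)) ≃ {c : ZMod n // c ≠ 0} where
  toFun := Quotient.lift (fun x => (⟨orbDiff n x, orbDiff_ne_zero n x⟩ : {c : ZMod n // c ≠ 0}))
    (fun a b h => Subtype.ext (orbDiff_invariant n a b h))
  invFun c := Quotient.mk _ ⟨rootA n 0 c.1, rootA_mem n (Ne.symm c.2)⟩
  left_inv := by
    refine Quotient.ind (fun x => ?_)
    obtain ⟨hne, heq⟩ := repPair_spec n x
    set i := (repPair n x).1
    set j := (repPair n x).2
    show Quotient.mk _ _ = Quotient.mk _ x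
    refine Quotient.sound ?_
    refine ⟨(i.val : ℤ), ?_⟩
    show (wCoxA n ^ (i.val : ℤ)) (rootA n 0 (orbDiff n x)) = x.1
    rw [wpow_rootA, ← heq]
    have hcast : ((i.val : ℤ) : ZMod n) = i := by
      push_cast
      simp [ZMod.natCast_val, ZMod.cast_id]
    rw [hcast, zero_add, orbDiff]
    congr 1
    ring
  right_inv := by
    rintro ⟨c, hc⟩
    apply Subtype.ext
    show orbDiff n _ = c
    rw [orbDiff_rootA n (Ne.symm hc), sub_zero]

/-- Let `R = A_{n-1}` be realised as `{e_i - e_j : i ≠ j in ℤ/nℤ}`, let `w` be the Coxeter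
element with `w(e_i) = e_{i+1}`, and for `q ∈ (ℤ/nℤ)ˣ` let `ν_q` be the automorphism with
`ν_q(e_i) = e_{qi}`.  Then the sign of the permutation of the orbit set `⟨w⟩\R` induced by
`ν_q` equals the sign of the multiplication-by-`q` permutation of `ℤ/nℤ`. -/
theorem sign_norm_on_coxeter_orbits_eq_sign_mul
    (n : ℕ) [NeZero n] (q : (ZMod n)ˣ)
    (σ : Equiv.Perm (Quotient (orbitSetoidOn (wCoxA n) (rootsA n))))
    (hσ : ∀ (i j : ZMod n), i ≠ j →
      ∀ (h1 : rootA n i j ∈ rootsA n) (h2 : rootA n (q * i) (q * j) ∈ rootsA n),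
        σ (Quotient.mk (orbitSetoidOn (wCoxA n) (rootsA n)) ⟨rootA n i j, h1⟩) =
          Quotient.mk (orbitSetoidOn (wCoxA n) (rootsA n)) ⟨rootA n (q * i) (q * j), h2⟩)
    (π : Equiv.Perm (ZMod n)) (hπ : ∀ x : ZMod n, π x = (q : ZMod n) * x) :
    Equiv.Perm.sign σ = Equiv.Perm.sign π := by
  have hπ0 : π 0 = 0 := by rw [hπ, mul_zero]
  have hmem : ∀ x : ZMod n, x ≠ 0 ↔ π x ≠ 0 := by
    intro x
    rw [hπ]
    constructor
    · intro h hc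
      exact h ((Units.mul_right_eq_zero q).mp hc)
    · intro h hc
      exact h (by rw [hc, mul_zero])
  have key : (orbitEquiv n).permCongr σ = π.subtypePerm (p := fun x => x ≠ 0) (fun x => (hmem x).symm) := by
    apply Equiv.ext
    rintro ⟨c, hc⟩
    apply Subtype.ext
    show ((orbitEquiv n) (σ ((orbitEquiv n).symm ⟨c, hc⟩))).1 = π c
    have h0c : (0 : ZMod n) ≠ c := Ne.symm hc
    have hqc : (q : ZMod n) * 0 ≠ (q : ZMod n) * c := by
      rw [mul_zero]
      intro hc'
      exact hc ((Units.mul_right_eq_zero q).mp hc'.symm)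
    have h2 : rootA n ((q : ZMod n) * 0) ((q : ZMod n) * c) ∈ rootsA n := rootA_mem n hqc
    have hsymm : (orbitEquiv n).symm ⟨c, hc⟩ =
        Quotient.mk _ ⟨rootA n 0 c, rootA_mem n h0c⟩ := rfl
    rw [hsymm, hσ 0 c h0c _ h2]
    show orbDiff n _ = π c
    rw [orbDiff_rootA n hqc, mul_zero, sub_zero, hπ]
  calc Equiv.Perm.sign σ = Equiv.Perm.sign ((orbitEquiv n).permCongr σ) :=
        (Equiv.Perm.sign_permCongr (orbitEquiv n) σ).symm
    _ = Equiv.Perm.sign (π.subtypePerm (p := fun x => x ≠ 0) (fun x => (hmem x).symm)) := by rw [key]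
    _ = Equiv.Perm.sign π := Equiv.Perm.sign_subtypePerm π (p := fun x => x ≠ 0) (fun x => (hmem x).symm)
        (fun x hx => fun hc => hx (by rw [hc, hπ0]))
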